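/- Let M' ∈ {0,1}^{k×k} be a square 0/1 matrix having two distinct rows i and j such that M'_{i,c} ≤ M'_{j,c} for every column c and such that the two rows differ in at most one column. Then either det M' = 0, or there exist a row and a column of M' whose deletion yields a (k−1)×(k−1) submatrix M'' with |det M''| = |det M'|. The same conclusion holds with 'rows' replaced by 'columns'. -/

import Mathlib

private lemma stmt5_aux {n : ℕ} (M : Matrix (Fin (n + 1)) (Fin (n + 1)) ℤ)
    (h01 : ∀ i j, M i j = 0 ∨ M i j = 1)
    (i j : Fin (n + 1)) (hij : i ≠ j) (hle : ∀ c, M i c ≤ M j c)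
    (hs : {c : Fin (n + 1) | M i c ≠ M j c}.Subsingleton) :
    M.det = 0 ∨ ∃ r c : Fin (n + 1),
      |(M.submatrix r.succAbove c.succAbove).det| = |M.det| := by
  by_cases heq : ∀ c, M i c = M j c
  · exact Or.inl (Matrix.det_zero_of_row_eq hij (funext heq))
  · right
    push_neg at heq
    obtain ⟨c, hc⟩ := heq
    have huniq : ∀ c', M i c' ≠ M j c' → c' = c := fun c' h => hs h hc
    have hval : M j c - M i c = 1 := by
      have hlec := hle c
      rcases h01 i c with h1 | h1 <;> rcases h01 j c with h2 | h2 <;>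
        rw [h1, h2] at hc hlec ⊢ <;> omega
    set N := M.updateRow j (M j - M i) with hN
    have hdet : N.det = M.det := by
      have h := Matrix.det_updateRow_add_smul_self M hij.symm (-1)
      simpa [hN, sub_eq_add_neg] using h
    have hrow0 : ∀ c', c' ≠ c → N j c' = 0 := by
      intro c' hc'
      have : M i c' = M j c' := by
        by_contra h; exact hc' (huniq c' h)
      simp [hN, this]
    have hrowc : N j c = 1 := by simp [hN, hval]
    have hsubm : N.submatrix j.succAbove c.succAbove
        = M.submatrix j.succAbove c.succAbove := by
      ext a b
      simp [hN, Matrix.updateRow_ne (Fin.succAbove_ne j a)]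
    have hexp := Matrix.det_succ_row N j
    rw [Finset.sum_eq_single c] at hexp
    · refine ⟨j, c, ?_⟩
      rw [← hdet, hexp, hrowc, hsubm]
      simp [abs_mul, abs_pow]
    · intro b _ hb
      rw [hrow0 b hb]; ring
    · intro h; exact absurd (Finset.mem_univ c) h

theorem stmt5 {n : ℕ} (M : Matrix (Fin (n + 1)) (Fin (n + 1)) ℤ)
    (h01 : ∀ i j, M i j = 0 ∨ M i j = 1)
    (hfault :
      (∃ i j : Fin (n + 1), i ≠ j ∧ (∀ c, M i c ≤ M j c) ∧
        {c : Fin (n + 1) | M i c ≠ M j c}.Subsingleton) ∨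
      (∃ i j : Fin (n + 1), i ≠ j ∧ (∀ r, M r i ≤ M r j) ∧
        {r : Fin (n + 1) | M r i ≠ M r j}.Subsingleton)) :
    M.det = 0 ∨ ∃ r c : Fin (n + 1),
      |(M.submatrix r.succAbove c.succAbove).det| = |M.det| := by
  rcases hfault with ⟨i, j, hij, hle, hs⟩ | ⟨i, j, hij, hle, hs⟩
  · exact stmt5_aux M h01 i j hij hle hs
  · have h := stmt5_aux M.transpose (fun a b => h01 b a) i j hij hle hs
    rcases h with h | ⟨r, c, h⟩
    · left; rwa [Matrix.det_transpose] at h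
    · right
      refine ⟨c, r, ?_⟩
      rw [Matrix.det_transpose] at h
      rw [← h]
      congr 1
      rw [← Matrix.det_transpose (M.submatrix c.succAbove r.succAbove)]
      rfl
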